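/- For every musical interval σ ∈ 𝔖 with σ ≠ 𝔬, one has 𝒩(K(σ)) ≤ m_σ < n_σ; in particular there exists ℓ ∈ ℕ₀ such that 2^ℓ · n_{K(σ)} = m_σ. -/

import Mathlib

/-- The positive rational numbers ℚ₊. -/
abbrev Qpos := {q : ℚ // 0 < q}

/-- Octave equivalence on ℚ₊: `q₁ ∼ q₂` iff `q₁ = 2^n * q₂` for some `n ∈ ℤ`. -/
def octaveRel (q₁ q₂ : Qpos) : Prop := ∃ n : ℤ, (q₁ : ℚ) = 2 ^ n * (q₂ : ℚ)

/-- The group of musical intervals `𝔖 = ℚ₊/∼`. -/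
def MusInt := Quot octaveRel

/-- The musical interval `[q]` represented by a positive rational `q`. -/
def cls (q : ℚ) (h : 0 < q) : MusInt := Quot.mk octaveRel ⟨q, h⟩

/-- The octave `𝔬 = [1/2]`. -/
def octave : MusInt := cls (1/2) (by norm_num)

/-- `repSpec σ (m, n)` says that `(m, n)` is a reduced representative of `σ`,
i.e. `σ = [m/n]`, `1/2 ≤ m/n < 1` and `gcd(n, m) = 1`. -/
def repSpec (σ : MusInt) (p : ℕ × ℕ) : Prop :=
  ∃ h : (0 : ℚ) < (p.1 : ℚ) / (p.2 : ℚ),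
    σ = cls ((p.1 : ℚ) / (p.2 : ℚ)) h ∧
    (1 : ℚ) / 2 ≤ (p.1 : ℚ) / (p.2 : ℚ) ∧ (p.1 : ℚ) / (p.2 : ℚ) < 1 ∧
    Nat.gcd p.2 p.1 = 1

open Classical in
/-- The canonical reduced representative `(m_σ, n_σ)` of a musical interval. -/
noncomputable def rep (σ : MusInt) : ℕ × ℕ :=
  if h : ∃ p, repSpec σ p then h.choose else (1, 2)

/-- The numerator `m_σ`, so that `σ = [m_σ/n_σ]`. -/
noncomputable def mVal (σ : MusInt) : ℕ := (rep σ).1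

/-- The map `𝒩`, sending `σ` to the denominator `n_σ`, so that `σ = [m_σ/n_σ]`. -/
noncomputable def nVal (σ : MusInt) : ℕ := (rep σ).2

/-- The Kepler map `K(σ) = [(n_σ - m_σ)/m_σ]`. -/
noncomputable def kepler (σ : MusInt) : MusInt :=
  if h : (0 : ℚ) < ((nVal σ : ℚ) - (mVal σ : ℚ)) / (mVal σ : ℚ) then
    cls (((nVal σ : ℚ) - (mVal σ : ℚ)) / (mVal σ : ℚ)) h
  else octave

/-- The height `𝔥(σ) = min {ℓ ∈ ℕ₀ : K^ℓ(σ) = 𝔬}`. -/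
noncomputable def height (σ : MusInt) : ℕ := sInf {ℓ : ℕ | kepler^[ℓ] σ = octave}

/-- `n` is an Euclidean Gauss–Wantzel number: `n = 2^k * 3^l * 5^m` with
`l, m ∈ {0, 1}` and `n > 1`. -/
def IsEuclidean (n : ℕ) : Prop :=
  1 < n ∧ ∃ k l m : ℕ, (l = 0 ∨ l = 1) ∧ (m = 0 ∨ m = 1) ∧ n = 2 ^ k * 3 ^ l * 5 ^ m

/-- `p` is a Fermat prime: a prime of the form `2^(2^n) + 1`. -/
def IsFermatPrime (p : ℕ) : Prop := p.Prime ∧ ∃ n : ℕ, p = 2 ^ (2 ^ n) + 1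

/-- `n` is a Gauss–Wantzel number: `n > 1` is a power of `2` times a product of
distinct Fermat primes. -/
def IsGaussWantzel (n : ℕ) : Prop :=
  1 < n ∧ ∃ (k : ℕ) (s : Finset ℕ), (∀ p ∈ s, IsFermatPrime p) ∧ n = 2 ^ k * ∏ p ∈ s, p

/-- `σ` is Euclidean consonant: all members of its second Kepler sequence are
Euclidean Gauss–Wantzel numbers. -/
def EuclideanConsonant (σ : MusInt) : Prop :=
  ∀ j ≤ height σ, IsEuclidean (nVal (kepler^[j] σ))

/-- `σ` is Gaussian consonant: all members of its second Kepler sequence are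
Gauss–Wantzel numbers. -/
def GaussianConsonant (σ : MusInt) : Prop :=
  ∀ j ≤ height σ, IsGaussWantzel (nVal (kepler^[j] σ))

lemma octaveRel_equiv : Equivalence octaveRel := by
  constructor
  · intro q; exact ⟨0, by simp⟩
  · rintro a b ⟨n, h⟩
    refine ⟨-n, ?_⟩
    rw [h, ← mul_assoc, ← zpow_add₀ (by norm_num : (2:ℚ) ≠ 0)]
    simp
  · rintro a b c ⟨n, h⟩ ⟨m, h2⟩
    refine ⟨n + m, ?_⟩
    rw [h, h2, ← mul_assoc, ← zpow_add₀ (by norm_num : (2:ℚ) ≠ 0)]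

lemma cls_eq_iff {a b : ℚ} (ha : 0 < a) (hb : 0 < b) :
    cls a ha = cls b hb ↔ ∃ n : ℤ, a = 2 ^ n * b := by
  constructor
  · intro h
    exact (octaveRel_equiv.eqvGen_iff).1 (Quot.eqvGen_exact h)
  · intro h
    exact Quot.sound h

lemma pos_pos_of_div_pos {m n : ℕ} (h : (0:ℚ) < (m:ℚ)/(n:ℚ)) : 0 < m ∧ 0 < n := by
  rcases Nat.eq_zero_or_pos n with h0 | h0
  · simp [h0] at h
  rcases Nat.eq_zero_or_pos m with h1 | h1
  · simp [h1] at h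
  exact ⟨h1, h0⟩

lemma repSpec_unique {σ : MusInt} {p q : ℕ × ℕ} (hp : repSpec σ p) (hq : repSpec σ q) :
    p = q := by
  obtain ⟨hp0, hpσ, hp1, hp2, hp3⟩ := hp
  obtain ⟨hq0, hqσ, hq1, hq2, hq3⟩ := hq
  obtain ⟨k, hk⟩ := (cls_eq_iff hp0 hq0).1 (hpσ ▸ hqσ)
  have hk0 : k = 0 := by
    by_contra hne
    rcases lt_or_gt_of_ne hne with hlt | hgt
    · have hkle : k ≤ -1 := by omega
      have h2k : (2:ℚ) ^ k ≤ 2 ^ (-1 : ℤ) :=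
        zpow_le_zpow_right₀ (by norm_num) hkle
      have hx : (p.1:ℚ)/(p.2:ℚ) < 1/2 := by
        calc (p.1:ℚ)/(p.2:ℚ) = 2 ^ k * ((q.1:ℚ)/(q.2:ℚ)) := hk
        _ ≤ 2 ^ (-1:ℤ) * ((q.1:ℚ)/(q.2:ℚ)) :=
            mul_le_mul_of_nonneg_right h2k (le_of_lt hq0)
        _ < 2 ^ (-1:ℤ) * 1 := mul_lt_mul_of_pos_left hq2 (by positivity)
        _ = 1/2 := by norm_num
      linarith
    · have hkge : (1:ℤ) ≤ k := hgt
      have h2k : (2:ℚ) ^ (1:ℤ) ≤ 2 ^ k := zpow_le_zpow_right₀ (by norm_num) hkge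
      have hx : (1:ℚ) ≤ (p.1:ℚ)/(p.2:ℚ) := by
        calc (1:ℚ) = 2 ^ (1:ℤ) * (1/2) := by norm_num
        _ ≤ 2 ^ k * ((q.1:ℚ)/(q.2:ℚ)) :=
            mul_le_mul h2k hq1 (by norm_num) (by positivity)
        _ = (p.1:ℚ)/(p.2:ℚ) := hk.symm
      linarith
  rw [hk0] at hk
  simp only [zpow_zero, one_mul] at hk
  obtain ⟨hpm, hpn⟩ := pos_pos_of_div_pos hp0
  obtain ⟨hqm, hqn⟩ := pos_pos_of_div_pos hq0
  have hpn' : ((p.2:ℚ)) ≠ 0 := by positivity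
  have hqn' : ((q.2:ℚ)) ≠ 0 := by positivity
  have hcross : p.1 * q.2 = q.1 * p.2 := by
    field_simp at hk
    rw [mul_comm q.1]
    exact_mod_cast hk
  have hd1 : p.2 ∣ q.2 := by
    have h' : p.2 ∣ p.1 * q.2 := hcross ▸ dvd_mul_left p.2 q.1
    exact Nat.Coprime.dvd_of_dvd_mul_left hp3 h'
  have hd2 : q.2 ∣ p.2 := by
    have h' : q.2 ∣ q.1 * p.2 := hcross ▸ dvd_mul_left q.2 p.1
    exact Nat.Coprime.dvd_of_dvd_mul_left hq3 h'
  have hn : p.2 = q.2 := Nat.dvd_antisymm hd1 hd2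
  have hm : p.1 = q.1 := by
    have := hcross
    rw [hn] at this
    exact Nat.eq_of_mul_eq_mul_right hqn this
  exact Prod.ext hm hn

lemma exists_repSpec (σ : MusInt) : ∃ p, repSpec σ p := by
  induction σ using Quot.ind with
  | _ x =>
    obtain ⟨q, hq⟩ := x
    obtain ⟨k, hk1, hk2⟩ := exists_mem_Ico_zpow hq (by norm_num : (1:ℚ) < 2)
    set r : ℚ := 2 ^ (-(k+1)) * q with hr
    have hrpos : 0 < r := by positivity
    have h2ne : (2:ℚ) ≠ 0 := by norm_num
    have hr1 : (1:ℚ)/2 ≤ r := by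
      have : (2:ℚ) ^ (-(k+1)) * 2 ^ k ≤ r :=
        mul_le_mul_of_nonneg_left hk1 (by positivity)
      rwa [← zpow_add₀ h2ne, show -(k+1) + k = -1 by ring,
        show ((2:ℚ))^(-1:ℤ) = 1/2 by norm_num] at this
    have hr2 : r < 1 := by
      have : r < (2:ℚ) ^ (-(k+1)) * 2 ^ (k+1) :=
        mul_lt_mul_of_pos_left hk2 (by positivity)
      rwa [← zpow_add₀ h2ne, show -(k+1) + (k+1) = 0 by ring, zpow_zero] at this
    have hnum : 0 < r.num := Rat.num_pos.2 hrpos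
    refine ⟨(r.num.toNat, r.den), ?_⟩
    have hcast : ((r.num.toNat : ℚ)) = (r.num : ℚ) := by
      exact_mod_cast congrArg (Int.cast : ℤ → ℚ) (Int.toNat_of_nonneg hnum.le)
    have hval : ((r.num.toNat : ℚ)) / ((r.den : ℚ)) = r := by
      rw [hcast]; exact Rat.num_div_den r
    have hpos : (0:ℚ) < ((r.num.toNat : ℚ)) / ((r.den : ℚ)) := by rw [hval]; exact hrpos
    refine ⟨hpos, ?_, by rwa [hval], by rwa [hval], ?_⟩
    · have : cls ((r.num.toNat : ℚ) / (r.den : ℚ)) hpos = cls r hrpos := by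
        rw [cls_eq_iff]; exact ⟨0, by rw [zpow_zero, one_mul, hval]⟩
      rw [this]
      apply (Quot.sound : octaveRel _ _ → _)
      refine ⟨k+1, ?_⟩
      show q = 2 ^ (k+1) * r
      rw [hr, ← mul_assoc, ← zpow_add₀ h2ne,
        show (k+1) + -(k+1) = 0 by ring, zpow_zero, one_mul]
    · have := r.reduced
      have hnatAbs : r.num.natAbs = r.num.toNat := by omega
      rw [Nat.gcd_comm, ← hnatAbs]
      exact this

lemma repSpec_rep (σ : MusInt) : repSpec σ (rep σ) := by
  rw [rep, dif_pos (exists_repSpec σ)]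
  exact (exists_repSpec σ).choose_spec

lemma rep_eq {σ : MusInt} {p : ℕ × ℕ} (hp : repSpec σ p) : rep σ = p :=
  repSpec_unique (repSpec_rep σ) hp


/-- for `σ ≠ 𝔬` one has `𝒩(K(σ)) ≤ m_σ < n_σ`, and in particular
`2^ℓ * n_{K(σ)} = m_σ` for some `ℓ ∈ ℕ₀`. -/
theorem nVal_kepler_le_mVal (σ : MusInt) (hσ : σ ≠ octave) :
    nVal (kepler σ) ≤ mVal σ ∧ mVal σ < nVal σ ∧
      ∃ ℓ : ℕ, 2 ^ ℓ * nVal (kepler σ) = mVal σ := by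
  have hspec : repSpec σ (mVal σ, nVal σ) := repSpec_rep σ
  obtain ⟨hpos, hσeq, hhalf, hlt1, hcop⟩ := hspec
  dsimp only at hpos hσeq hhalf hlt1 hcop
  set m := mVal σ with hm
  set n := nVal σ with hn
  obtain ⟨hm0, hn0⟩ := pos_pos_of_div_pos hpos
  have hnQ : (0:ℚ) < (n:ℚ) := by exact_mod_cast hn0
  have hmQ : (0:ℚ) < (m:ℚ) := by exact_mod_cast hm0
  have hmn : m < n := by
    have : (m:ℚ) < n := by rwa [div_lt_one hnQ] at hlt1
    exact_mod_cast this
  have hstrict : (1:ℚ)/2 < (m:ℚ)/(n:ℚ) := by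
    rcases lt_or_eq_of_le hhalf with h | h
    · exact h
    · exfalso
      apply hσ
      rw [hσeq]
      unfold octave cls
      congr 1
      exact Subtype.ext h.symm
  have hn2m : n < 2 * m := by
    have h' : (n:ℚ) < 2 * m := by
      rw [div_lt_div_iff₀ (by norm_num) hnQ] at hstrict
      linarith
    exact_mod_cast h'
  set d := n - m with hd
  have hd0 : 0 < d := by omega
  have hdm : d < m := by omega
  have hdcast : (d:ℚ) = (n:ℚ) - (m:ℚ) := by
    rw [hd, Nat.cast_sub hmn.le]
  have hrpos : (0:ℚ) < ((n:ℚ) - (m:ℚ)) / (m:ℚ) := by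
    apply div_pos _ hmQ
    have : (m:ℚ) < n := by exact_mod_cast hmn
    linarith
  have hkep : kepler σ = cls (((n:ℚ) - (m:ℚ))/(m:ℚ)) hrpos := by
    rw [kepler, dif_pos]
  -- find j to rescale d/m into [1/2, 1)
  have hr : (0:ℚ) < (d:ℚ)/(m:ℚ) := by
    rw [hdcast]; exact hrpos
  obtain ⟨k, hk1, hk2⟩ := exists_mem_Ico_zpow hr (by norm_num : (1:ℚ) < 2)
  have hdmQ : (d:ℚ)/(m:ℚ) < 1 := by
    rw [div_lt_one hmQ]; exact_mod_cast hdm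
  have hklt : k < 0 := by
    by_contra h
    push_neg at h
    have : (1:ℚ) ≤ 2 ^ k := one_le_zpow₀ (by norm_num) h
    linarith
  set j := (-(k+1)).toNat with hj
  have hjk : (j:ℤ) = -(k+1) := Int.toNat_of_nonneg (by omega)
  have h2ne : (2:ℚ) ≠ 0 := by norm_num
  have hpowj : ((2:ℚ) ^ j : ℚ) = (2:ℚ) ^ ((j:ℤ)) := (zpow_natCast 2 j).symm
  have hs1 : (1:ℚ)/2 ≤ (2:ℚ)^j * ((d:ℚ)/(m:ℚ)) := by
    have : (2:ℚ) ^ ((j:ℤ)) * 2 ^ k ≤ (2:ℚ) ^ ((j:ℤ)) * ((d:ℚ)/(m:ℚ)) :=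
      mul_le_mul_of_nonneg_left hk1 (by positivity)
    rw [← zpow_add₀ h2ne, hjk, show -(k+1) + k = -1 by ring, ← hjk] at this
    rw [hpowj]
    calc (1:ℚ)/2 = (2:ℚ)^(-1:ℤ) := by norm_num
    _ ≤ _ := this
  have hs2 : (2:ℚ)^j * ((d:ℚ)/(m:ℚ)) < 1 := by
    have : (2:ℚ) ^ ((j:ℤ)) * ((d:ℚ)/(m:ℚ)) < (2:ℚ) ^ ((j:ℤ)) * 2 ^ (k+1) :=
      mul_lt_mul_of_pos_left hk2 (by positivity)
    rw [← zpow_add₀ h2ne, hjk, show -(k+1) + (k+1) = 0 by ring, zpow_zero, ← hjk] at this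
    rwa [hpowj]
  -- natural number bookkeeping
  set g := Nat.gcd m (2^j * d) with hg
  have hgm : g ∣ m := Nat.gcd_dvd_left _ _
  have hgpos : 0 < g := Nat.gcd_pos_of_pos_left _ hm0
  have hmd : Nat.Coprime m d := by
    have := Nat.gcd_sub_self_left (m := m) (n := n) hmn.le
    rw [hcop] at this
    exact Nat.Coprime.symm this
  have hgd2 : g ∣ 2^j := by
    have h1 : g ∣ 2^j * d := Nat.gcd_dvd_right _ _
    exact Nat.Coprime.dvd_of_dvd_mul_right
      (Nat.Coprime.coprime_dvd_left hgm hmd) h1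
  obtain ⟨ℓ, hℓj, hgℓ⟩ := (Nat.dvd_prime_pow Nat.prime_two).1 hgd2
  -- the reduced representative of kepler σ
  set a := (2^j * d) / g with ha
  set b := m / g with hb
  have hcastg : ((g:ℚ)) ≠ 0 := by positivity
  have hca : ((a:ℚ)) = ((2^j * d : ℕ):ℚ) / (g:ℚ) := by
    rw [ha, Nat.cast_div (Nat.gcd_dvd_right _ _) hcastg]
  have hcb : ((b:ℚ)) = ((m:ℚ)) / (g:ℚ) := by
    rw [hb, Nat.cast_div hgm hcastg]
  have hbpos : 0 < b := Nat.div_pos (Nat.le_of_dvd hm0 hgm) hgpos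
  have hbQ : (0:ℚ) < (b:ℚ) := by exact_mod_cast hbpos
  have hvalab : ((a:ℚ))/((b:ℚ)) = (2:ℚ)^j * ((d:ℚ)/(m:ℚ)) := by
    rw [hca, hcb]
    rw [div_div_div_cancel_right₀]
    · push_cast
      ring
    · exact hcastg
  have habpos : (0:ℚ) < (a:ℚ)/(b:ℚ) := by
    rw [hvalab]; positivity
  have hcopab : Nat.gcd b a = 1 := by
    rw [hb, ha, hg]
    exact Nat.coprime_div_gcd_div_gcd hgpos
  have hclseq : kepler σ = cls ((a:ℚ)/(b:ℚ)) habpos := by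
    rw [hkep, cls_eq_iff]
    refine ⟨-(j:ℤ), ?_⟩
    rw [hvalab, ← hdcast, ← mul_assoc, hpowj, ← zpow_add₀ h2ne,
      show -(j:ℤ) + (j:ℤ) = 0 by ring, zpow_zero, one_mul]
  have hs1' : (1:ℚ)/2 ≤ (a:ℚ)/(b:ℚ) := by rw [hvalab]; exact hs1
  have hs2' : (a:ℚ)/(b:ℚ) < 1 := by rw [hvalab]; exact hs2
  have hrepK : repSpec (kepler σ) (a, b) := ⟨habpos, hclseq, hs1', hs2', hcopab⟩
  have hrepEq : rep (kepler σ) = (a, b) := rep_eq hrepK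
  have hnK : nVal (kepler σ) = b := by rw [nVal, hrepEq]
  refine ⟨?_, hmn, ℓ, ?_⟩
  · rw [hnK, hb]; exact Nat.div_le_self _ _
  · rw [hnK, hb, ← hgℓ]
    exact Nat.mul_div_cancel' hgm
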